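/- Backdoor adjustment for functional causal models: in the backdoor functional model, for all x in 𝒳 and y in 𝒴, P(Y_x = y) = sum over z of P(Z = z) times P(Y = y | X = x, Z = z). -/

import Mathlib

/-!
Backdoor functional causal model: independent noises `u ~ muU`, `e_Z ~ muEZ`,
`e_X ~ muEX`, `e_Y ~ muEY`; `Z := gZ (u, e_Z)`, `X := gX (Z, e_X)`, `Y := gY (X, Z, u, e_Y)`;
under `do(X = x)`, `Y_x := gY (x, Z, u, e_Y)`.
STATEMENT 7: assuming `P(X = x, Z = z) > 0` for all `x, z`, for all `x, y`,
`P(Y_x = y) = ∑ z, P(Z = z) * P(Y = y | X = x, Z = z)`.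
-/

open scoped ENNReal

/-- Observational joint law of `(Z, X, Y)` in the backdoor functional model. -/
noncomputable def bdObs {𝒰 EZ EX EY 𝒵 𝒳 𝒴 : Type}
    (muU : PMF 𝒰) (muEZ : PMF EZ) (muEX : PMF EX) (muEY : PMF EY)
    (gZ : 𝒰 × EZ → 𝒵) (gX : 𝒵 × EX → 𝒳) (gY : 𝒳 × 𝒵 × 𝒰 × EY → 𝒴) :
    PMF (𝒵 × 𝒳 × 𝒴) := do
  let u ← muU
  let ez ← muEZ
  let ex ← muEX
  let ey ← muEY
  let z := gZ (u, ez)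
  let x := gX (z, ex)
  pure (z, x, gY (x, z, u, ey))

/-- Interventional law of `Y_x` under `do(X = x)` in the backdoor functional model. -/
noncomputable def bdDo {𝒰 EZ EY 𝒵 𝒳 𝒴 : Type}
    (muU : PMF 𝒰) (muEZ : PMF EZ) (muEY : PMF EY)
    (gZ : 𝒰 × EZ → 𝒵) (gY : 𝒳 × 𝒵 × 𝒰 × EY → 𝒴) (x : 𝒳) : PMF 𝒴 := do
  let u ← muU
  let ez ← muEZ
  let ey ← muEY
  pure (gY (x, gZ (u, ez), u, ey))

open Classical

private lemma pmf_bind_eq {α β : Type} (p : PMF α) (f : α → PMF β) : (p >>= f) = p.bind f := rfl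
private lemma pmf_pure_eq {α : Type} (a : α) : (Pure.pure a : PMF α) = PMF.pure a := rfl

section Aux

variable {𝒰 EZ EX EY 𝒵 𝒳 𝒴 : Type}
    [Fintype 𝒰] [Fintype EZ] [Fintype EX] [Fintype EY] [Fintype 𝒵]
    (muU : PMF 𝒰) (muEZ : PMF EZ) (muEX : PMF EX) (muEY : PMF EY)
    (gZ : 𝒰 × EZ → 𝒵) (gX : 𝒵 × EX → 𝒳) (gY : 𝒳 × 𝒵 × 𝒰 × EY → 𝒴)

private lemma bd_margZ (z : 𝒵) :
    (bdObs muU muEZ muEX muEY gZ gX gY).map (fun v => v.1) z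
    = ∑ p : 𝒰 × EZ, if z = gZ p then muU p.1 * muEZ p.2 else 0 := by
  simp [bdObs, pmf_bind_eq, pmf_pure_eq, PMF.map_bind, PMF.pure_map, PMF.monad_map_eq_map,
    PMF.bind_const, PMF.bind_apply, PMF.pure_apply, tsum_fintype, Fintype.sum_prod_type,
    Finset.mul_sum, mul_ite, mul_zero]

private lemma bd_margZX (z : 𝒵) (x : 𝒳) :
    (bdObs muU muEZ muEX muEY gZ gX gY).map (fun v => (v.1, v.2.1)) (z, x)
    = (∑ p : 𝒰 × EZ, if z = gZ p then muU p.1 * muEZ p.2 else 0) *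
      (∑ ex : EX, if x = gX (z, ex) then muEX ex else 0) := by
  rw [Finset.sum_mul_sum]
  simp only [bdObs, pmf_bind_eq, pmf_pure_eq, PMF.map_bind, PMF.pure_map,
    PMF.monad_map_eq_map, PMF.bind_const, PMF.bind_apply, PMF.pure_apply, tsum_fintype,
    Fintype.sum_prod_type, Finset.mul_sum, mul_ite, mul_zero]
  refine Finset.sum_congr rfl fun u _ => Finset.sum_congr rfl fun ez _ =>
    Finset.sum_congr rfl fun ex _ => ?_
  by_cases h1 : z = gZ (u, ez)
  · subst h1
    by_cases h2 : x = gX (gZ (u, ez), ex)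
    · subst h2; simp [mul_assoc]
    · simp [h2, Prod.ext_iff]
  · simp [h1, Prod.ext_iff]

private lemma bd_joint (z : 𝒵) (x : 𝒳) (y : 𝒴) :
    bdObs muU muEZ muEX muEY gZ gX gY (z, x, y)
    = (∑ ex : EX, if x = gX (z, ex) then muEX ex else 0) *
      (∑ q : (𝒰 × EZ) × EY, if z = gZ q.1 ∧ y = gY (x, z, q.1.1, q.2)
          then muU q.1.1 * muEZ q.1.2 * muEY q.2 else 0) := by
  rw [mul_comm, Finset.sum_mul_sum]
  simp only [bdObs, pmf_bind_eq, pmf_pure_eq, PMF.bind_apply, PMF.pure_apply, tsum_fintype,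
    Fintype.sum_prod_type, Finset.mul_sum, mul_ite, mul_zero]
  refine Finset.sum_congr rfl fun u _ => Finset.sum_congr rfl fun ez _ => ?_
  rw [Finset.sum_comm]
  refine Finset.sum_congr rfl fun ey _ => Finset.sum_congr rfl fun ex _ => ?_
  by_cases h1 : z = gZ (u, ez)
  · subst h1
    by_cases h2 : x = gX (gZ (u, ez), ex)
    · subst h2
      by_cases h3 : y = gY (gX (gZ (u, ez), ex), gZ (u, ez), u, ey)
      · subst h3; simp [mul_assoc, mul_comm, mul_left_comm]
      · simp [h3, Prod.ext_iff]
    · simp [h2, Prod.ext_iff]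
  · simp [h1, Prod.ext_iff]

private lemma bd_do_eq (x : 𝒳) (y : 𝒴) :
    bdDo muU muEZ muEY gZ gY x y
    = ∑ z : 𝒵, ∑ q : (𝒰 × EZ) × EY, if z = gZ q.1 ∧ y = gY (x, z, q.1.1, q.2)
        then muU q.1.1 * muEZ q.1.2 * muEY q.2 else 0 := by
  rw [Finset.sum_comm]
  simp only [bdDo, pmf_bind_eq, pmf_pure_eq, PMF.bind_apply, PMF.pure_apply, tsum_fintype,
    Fintype.sum_prod_type, Finset.mul_sum, mul_ite, mul_zero, mul_one, ite_and,
    Finset.sum_ite_eq', Finset.mem_univ, if_true, mul_assoc]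

end Aux

theorem backdoor_adjustment_functional
    {𝒰 EZ EX EY 𝒵 𝒳 𝒴 : Type}
    [Fintype 𝒰] [Nonempty 𝒰] [Fintype EZ] [Nonempty EZ] [Fintype EX] [Nonempty EX]
    [Fintype EY] [Nonempty EY] [Fintype 𝒵] [Nonempty 𝒵] [Fintype 𝒳] [Nonempty 𝒳]
    [Fintype 𝒴] [Nonempty 𝒴]
    (muU : PMF 𝒰) (muEZ : PMF EZ) (muEX : PMF EX) (muEY : PMF EY)
    (gZ : 𝒰 × EZ → 𝒵) (gX : 𝒵 × EX → 𝒳) (gY : 𝒳 × 𝒵 × 𝒰 × EY → 𝒴)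
    (hpos : ∀ (x : 𝒳) (z : 𝒵),
      0 < (bdObs muU muEZ muEX muEY gZ gX gY).map (fun v => (v.1, v.2.1)) (z, x)) :
    ∀ (x : 𝒳) (y : 𝒴),
      bdDo muU muEZ muEY gZ gY x y =
        ∑ z : 𝒵,
          ((bdObs muU muEZ muEX muEY gZ gX gY).map (fun v => v.1) z) *
          ((bdObs muU muEZ muEX muEY gZ gX gY) (z, x, y)
            / (bdObs muU muEZ muEX muEY gZ gX gY).map (fun v => (v.1, v.2.1)) (z, x)) := by
  intro x y
  rw [bd_do_eq]
  refine Finset.sum_congr rfl fun z _ => ?_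
  set A : ℝ≥0∞ := ∑ p : 𝒰 × EZ, if z = gZ p then muU p.1 * muEZ p.2 else 0 with hA
  set B : ℝ≥0∞ := ∑ ex : EX, if x = gX (z, ex) then muEX ex else 0 with hB
  set C : ℝ≥0∞ := ∑ q : (𝒰 × EZ) × EY, if z = gZ q.1 ∧ y = gY (x, z, q.1.1, q.2)
      then muU q.1.1 * muEZ q.1.2 * muEY q.2 else 0 with hC
  have hAB : (bdObs muU muEZ muEX muEY gZ gX gY).map (fun v => (v.1, v.2.1)) (z, x) = A * B :=
    bd_margZX muU muEZ muEX muEY gZ gX gY z x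
  have hABne : A * B ≠ 0 := by
    have := hpos x z
    rw [hAB] at this
    exact this.ne'
  have hABtop : A * B ≠ ⊤ := by
    rw [← hAB]
    exact PMF.apply_ne_top _ _
  have hA0 : A ≠ 0 := fun h => hABne (by simp [h])
  have hB0 : B ≠ 0 := fun h => hABne (by simp [h])
  have hAtop : A ≠ ⊤ := fun h => hABtop (by simp [h, ENNReal.top_mul hB0])
  have hBtop : B ≠ ⊤ := fun h => hABtop (by simp [h, ENNReal.mul_top hA0])
  rw [bd_margZ, bd_joint, hAB, ← hA, ← hB, ← hC]
  rw [mul_comm A B, ENNReal.mul_div_mul_left _ _ hB0 hBtop]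
  rw [ENNReal.mul_div_cancel hA0 hAtop]
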